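/- Every ω-saturated LHS model is LHS-saturated: if M=(W,R,V) is ω-saturated (as a first-order structure for the correspondence language), then for every set Φ of LHS formulas and all w,v∈W, (1) if every finite subset of Φ is satisfiable in R(w)×{v} then Φ is satisfiable in R(w)×{v}, and (2) if every finite subset of Φ is satisfiable in {w}×R(v) then Φ is satisfiable in {w}×R(v). -/
import Mathlib


inductive LHSForm : Type
  | pl : ℕ → LHSForm
  | pr : ℕ → LHSForm
  | I : LHSForm
  | neg : LHSForm → LHSForm
  | and : LHSForm → LHSForm → LHSForm
  | box : LHSForm → LHSForm
  | bbox : LHSForm → LHSForm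
  deriving DecidableEq

def LHSForm.or (φ ψ : LHSForm) : LHSForm := .neg (.and φ.neg ψ.neg)
def LHSForm.imp (φ ψ : LHSForm) : LHSForm := .neg (.and φ ψ.neg)
def LHSForm.iff (φ ψ : LHSForm) : LHSForm := .and (φ.imp ψ) (ψ.imp φ)
def LHSForm.dia (φ : LHSForm) : LHSForm := .neg (.box φ.neg)
def LHSForm.bdia (φ : LHSForm) : LHSForm := .neg (.bbox φ.neg)

structure LHSModel where
  W : Type
  R : W → W → Prop
  Vl : ℕ → W → Prop
  Vr : ℕ → W → Prop

def LHSModel.sat (M : LHSModel) : M.W → M.W → LHSForm → Prop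
  | s, _, .pl i => M.Vl i s
  | _, t, .pr i => M.Vr i t
  | s, t, .I => s = t
  | s, t, .neg φ => ¬ M.sat s t φ
  | s, t, .and φ ψ => M.sat s t φ ∧ M.sat s t ψ
  | s, t, .box φ => ∀ s', M.R s s' → M.sat s' t φ
  | s, t, .bbox φ => ∀ t', M.R t t' → M.sat s t' φ

/-- Terms of the correspondence language expanded with constants (parameters)
for elements of `W`. -/
inductive FOTerm (W : Type) : Type
  | var : ℕ → FOTerm W
  | par : W → FOTerm W

/-- Formulas of the correspondence language with parameters from `W`. -/
inductive FOFormP (W : Type) : Type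
  | pl : ℕ → FOTerm W → FOFormP W
  | pr : ℕ → FOTerm W → FOFormP W
  | rel : FOTerm W → FOTerm W → FOFormP W
  | eq : FOTerm W → FOTerm W → FOFormP W
  | neg : FOFormP W → FOFormP W
  | and : FOFormP W → FOFormP W → FOFormP W
  | imp : FOFormP W → FOFormP W → FOFormP W
  | all : ℕ → FOFormP W → FOFormP W

def FOTerm.val {W : Type} (g : ℕ → W) : FOTerm W → W
  | .var x => g x
  | .par w => w

def FOsatP (M : LHSModel) : (ℕ → M.W) → FOFormP M.W → Prop
  | g, .pl i x => M.Vl i (x.val g)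
  | g, .pr i y => M.Vr i (y.val g)
  | g, .rel x y => M.R (x.val g) (y.val g)
  | g, .eq x y => x.val g = y.val g
  | g, .neg α => ¬ FOsatP M g α
  | g, .and α β => FOsatP M g α ∧ FOsatP M g β
  | g, .imp α β => FOsatP M g α → FOsatP M g β
  | g, .all x α => ∀ w, FOsatP M (Function.update g x w) α

def FOTerm.vars {W : Type} : FOTerm W → Set ℕ
  | .var x => {x}
  | .par _ => ∅

def FOTerm.pars {W : Type} : FOTerm W → Set W
  | .var _ => ∅
  | .par w => {w}

/-- Free variables of a formula with parameters. -/
def FOFormP.freeVars {W : Type} : FOFormP W → Set ℕ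
  | .pl _ x => x.vars
  | .pr _ y => y.vars
  | .rel x y => x.vars ∪ y.vars
  | .eq x y => x.vars ∪ y.vars
  | .neg α => α.freeVars
  | .and α β => α.freeVars ∪ β.freeVars
  | .imp α β => α.freeVars ∪ β.freeVars
  | .all x α => α.freeVars \ {x}

/-- Parameters occurring in a formula. -/
def FOFormP.pars {W : Type} : FOFormP W → Set W
  | .pl _ x => x.pars
  | .pr _ y => y.pars
  | .rel x y => x.pars ∪ y.pars
  | .eq x y => x.pars ∪ y.pars
  | .neg α => α.pars
  | .and α β => α.pars ∪ β.pars
  | .imp α β => α.pars ∪ β.pars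
  | .all _ α => α.pars

/-- ω-saturation (as a first-order structure for the correspondence language):
every type Γ(x) in the single free variable `0`, with finitely many parameters,
that is finitely realized is realized. -/
def LHSModel.OmegaSaturated (M : LHSModel) : Prop :=
  ∀ Γ : Set (FOFormP M.W),
    (∀ α ∈ Γ, FOFormP.freeVars α ⊆ {0}) →
    (⋃ α ∈ Γ, FOFormP.pars α).Finite →
    (∀ Γ₀ : Finset (FOFormP M.W), ↑Γ₀ ⊆ Γ →
        ∃ w : M.W, ∀ α ∈ Γ₀, FOsatP M (fun _ => w) α) →
    ∃ w : M.W, ∀ α ∈ Γ, FOsatP M (fun _ => w) α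

/-- M is LHS-saturated. -/
def LHSModel.LHSSaturated (M : LHSModel) : Prop :=
  ∀ (Φ : Set LHSForm) (w v : M.W),
    ((∀ Φ₀ : Finset LHSForm, ↑Φ₀ ⊆ Φ →
        ∃ s, M.R w s ∧ ∀ φ ∈ Φ₀, M.sat s v φ) →
      ∃ s, M.R w s ∧ ∀ φ ∈ Φ, M.sat s v φ) ∧
    ((∀ Φ₀ : Finset LHSForm, ↑Φ₀ ⊆ Φ →
        ∃ t, M.R v t ∧ ∀ φ ∈ Φ₀, M.sat w t φ) →
      ∃ t, M.R v t ∧ ∀ φ ∈ Φ, M.sat w t φ)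

/-- Standard translation: left coordinate is term `a`, right coordinate term `b`,
all variables in `a`, `b` are below `n`. -/
def stTr {W : Type} (n : ℕ) (a b : FOTerm W) : LHSForm → FOFormP W
  | .pl i => .pl i a
  | .pr i => .pr i b
  | .I => .eq a b
  | .neg φ => .neg (stTr n a b φ)
  | .and φ ψ => .and (stTr n a b φ) (stTr n a b ψ)
  | .box φ => .all n (.imp (.rel a (.var n)) (stTr (n+1) (.var n) b φ))
  | .bbox φ => .all n (.imp (.rel b (.var n)) (stTr (n+1) a (.var n) φ))

theorem FOTerm.val_update {W : Type} (g : ℕ → W) (x : ℕ) (w : W) (t : FOTerm W)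
    (h : x ∉ t.vars) : t.val (Function.update g x w) = t.val g := by
  cases t with
  | var y =>
    simp only [FOTerm.vars, Set.mem_singleton_iff] at h
    simp [FOTerm.val, Function.update_of_ne (Ne.symm h)]
  | par => rfl

theorem ST_freeVars {W : Type} :
    ∀ (φ : LHSForm) (n : ℕ) (a b : FOTerm W),
      (stTr n a b φ).freeVars ⊆ a.vars ∪ b.vars := by
  intro φ
  induction φ with
  | pl i => intro n a b; simp [stTr, FOFormP.freeVars]
  | pr i => intro n a b; simp [stTr, FOFormP.freeVars]
  | I => intro n a b; simp [stTr, FOFormP.freeVars]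
  | neg φ ih => intro n a b; exact ih n a b
  | and φ ψ ih1 ih2 =>
    intro n a b
    exact Set.union_subset (ih1 n a b) (ih2 n a b)
  | box φ ih =>
    intro n a b
    simp only [stTr, FOFormP.freeVars, FOTerm.vars]
    intro x hx
    rcases hx with ⟨hx, hxn⟩
    rcases hx with (⟨h | h⟩ | h)
    · exact Or.inl h
    · exact absurd h hxn
    · rcases ih (n+1) (.var n) b h with h' | h'
      · exact absurd h' hxn
      · exact Or.inr h'
  | bbox φ ih =>
    intro n a b
    simp only [stTr, FOFormP.freeVars, FOTerm.vars]
    intro x hx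
    rcases hx with ⟨hx, hxn⟩
    rcases hx with (⟨h | h⟩ | h)
    · exact Or.inr h
    · exact absurd h hxn
    · rcases ih (n+1) a (.var n) h with h' | h'
      · exact Or.inl h'
      · exact absurd h' hxn

theorem ST_pars {W : Type} :
    ∀ (φ : LHSForm) (n : ℕ) (a b : FOTerm W),
      (stTr n a b φ).pars ⊆ a.pars ∪ b.pars := by
  intro φ
  induction φ with
  | pl i => intro n a b; simp [stTr, FOFormP.pars]
  | pr i => intro n a b; simp [stTr, FOFormP.pars]
  | I => intro n a b; simp [stTr, FOFormP.pars]
  | neg φ ih => intro n a b; exact ih n a b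
  | and φ ψ ih1 ih2 =>
    intro n a b
    exact Set.union_subset (ih1 n a b) (ih2 n a b)
  | box φ ih =>
    intro n a b
    simp only [stTr, FOFormP.pars, FOTerm.pars]
    intro x hx
    rcases hx with (⟨h | h⟩ | h)
    · exact Or.inl h
    · exact absurd h (Set.notMem_empty x)
    · rcases ih (n+1) (.var n) b h with h' | h'
      · exact absurd h' (Set.notMem_empty x)
      · exact Or.inr h'
  | bbox φ ih =>
    intro n a b
    simp only [stTr, FOFormP.pars, FOTerm.pars]
    intro x hx
    rcases hx with (⟨h | h⟩ | h)
    · exact Or.inr h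
    · exact absurd h (Set.notMem_empty x)
    · rcases ih (n+1) a (.var n) h with h' | h'
      · exact Or.inl h'
      · exact absurd h' (Set.notMem_empty x)

theorem ST_correct (M : LHSModel) :
    ∀ (φ : LHSForm) (n : ℕ) (a b : FOTerm M.W) (g : ℕ → M.W),
      a.vars ⊆ Set.Iio n → b.vars ⊆ Set.Iio n →
      (FOsatP M g (stTr n a b φ) ↔ M.sat (a.val g) (b.val g) φ) := by
  intro φ
  induction φ with
  | pl i => intro n a b g _ _; exact Iff.rfl
  | pr i => intro n a b g _ _; exact Iff.rfl
  | I => intro n a b g _ _; exact Iff.rfl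
  | neg φ ih =>
    intro n a b g ha hb
    exact not_congr (ih n a b g ha hb)
  | and φ ψ ih1 ih2 =>
    intro n a b g ha hb
    exact and_congr (ih1 n a b g ha hb) (ih2 n a b g ha hb)
  | box φ ih =>
    intro n a b g ha hb
    have hna : n ∉ a.vars := fun h => lt_irrefl n (ha h)
    have hnb : n ∉ b.vars := fun h => lt_irrefl n (hb h)
    show (∀ w', _) ↔ (∀ w', _)
    apply forall_congr'
    intro w'
    have hA : a.val (Function.update g n w') = a.val g :=
      FOTerm.val_update g n w' a hna
    have hB : b.val (Function.update g n w') = b.val g :=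
      FOTerm.val_update g n w' b hnb
    have hv : (FOTerm.var n : FOTerm M.W).vars ⊆ Set.Iio (n+1) := by
      simp [FOTerm.vars]
    have hb' : b.vars ⊆ Set.Iio (n+1) :=
      hb.trans (Set.Iio_subset_Iio (Nat.le_succ n))
    have hvar : FOTerm.val (Function.update g n w') (FOTerm.var n) = w' := by
      simp [FOTerm.val]
    have hIH := ih (n+1) (.var n) b (Function.update g n w') hv hb'
    rw [hvar, hB] at hIH
    show (FOsatP M _ (.rel a (.var n)) → _) ↔ _
    simp only [FOsatP, hvar, hA, hIH]
  | bbox φ ih =>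
    intro n a b g ha hb
    have hna : n ∉ a.vars := fun h => lt_irrefl n (ha h)
    have hnb : n ∉ b.vars := fun h => lt_irrefl n (hb h)
    show (∀ w', _) ↔ (∀ w', _)
    apply forall_congr'
    intro w'
    have hA : a.val (Function.update g n w') = a.val g :=
      FOTerm.val_update g n w' a hna
    have hB : b.val (Function.update g n w') = b.val g :=
      FOTerm.val_update g n w' b hnb
    have hv : (FOTerm.var n : FOTerm M.W).vars ⊆ Set.Iio (n+1) := by
      simp [FOTerm.vars]
    have ha' : a.vars ⊆ Set.Iio (n+1) :=
      ha.trans (Set.Iio_subset_Iio (Nat.le_succ n))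
    have hvar : FOTerm.val (Function.update g n w') (FOTerm.var n) = w' := by
      simp [FOTerm.val]
    have hIH := ih (n+1) a (.var n) (Function.update g n w') ha' hv
    rw [hvar, hA] at hIH
    show (FOsatP M _ (.rel b (.var n)) → _) ↔ _
    simp only [FOsatP, hvar, hB, hIH]

theorem key (M : LHSModel) (hM : M.OmegaSaturated)
    (Φ : Set LHSForm) (w v : M.W)
    (sat' : M.W → LHSForm → Prop) (R' : M.W → Prop)
    (T : LHSForm → FOFormP M.W)
    (side : FOFormP M.W)
    (hTcorr : ∀ (φ : LHSForm) (s : M.W),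
      FOsatP M (fun _ => s) (T φ) ↔ sat' s φ)
    (hTfree : ∀ φ, (T φ).freeVars ⊆ {0})
    (hTpars : ∀ φ, (T φ).pars ⊆ {w, v})
    (hsidefree : side.freeVars ⊆ {0})
    (hsidepars : side.pars ⊆ {w, v})
    (hsidecorr : ∀ s : M.W, FOsatP M (fun _ => s) side ↔ R' s)
    (hfin : ∀ Φ₀ : Finset LHSForm, ↑Φ₀ ⊆ Φ →
        ∃ s, R' s ∧ ∀ φ ∈ Φ₀, sat' s φ) :
    ∃ s, R' s ∧ ∀ φ ∈ Φ, sat' s φ := by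
  classical
  set Γ : Set (FOFormP M.W) := insert side (T '' Φ) with hΓ
  have hfree : ∀ α ∈ Γ, FOFormP.freeVars α ⊆ {0} := by
    intro α hα
    rcases hα with rfl | ⟨φ, _, rfl⟩
    · exact hsidefree
    · exact hTfree φ
  have hpars : (⋃ α ∈ Γ, FOFormP.pars α).Finite := by
    apply Set.Finite.subset ((Set.finite_singleton v).insert w)
    intro x hx
    simp only [Set.mem_iUnion] at hx
    rcases hx with ⟨α, hα, hx⟩
    rcases hα with rfl | ⟨φ, _, rfl⟩
    · exact hsidepars hx
    · exact hTpars φ hx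
  have hfinreal : ∀ Γ₀ : Finset (FOFormP M.W), ↑Γ₀ ⊆ Γ →
      ∃ s : M.W, ∀ α ∈ Γ₀, FOsatP M (fun _ => s) α := by
    intro Γ₀ hΓ₀
    -- choose preimages
    let f : FOFormP M.W → LHSForm := fun α =>
      if h : ∃ φ ∈ Φ, T φ = α then h.choose else .I
    let Φ₀ : Finset LHSForm := (Γ₀.image f).filter (· ∈ Φ)
    have hΦ₀ : ↑Φ₀ ⊆ Φ := by
      intro φ hφ
      simp only [Φ₀, Finset.coe_filter, Set.mem_setOf_eq] at hφ
      exact hφ.2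
    rcases hfin Φ₀ hΦ₀ with ⟨s, hRs, hs⟩
    refine ⟨s, fun α hα => ?_⟩
    have hαΓ : α ∈ Γ := hΓ₀ hα
    rcases hαΓ with rfl | ⟨φ, hφ, hTφ⟩
    · exact (hsidecorr s).2 hRs
    · have hex : ∃ φ ∈ Φ, T φ = α := ⟨φ, hφ, hTφ⟩
      have hch := hex.choose_spec
      have hfα : f α = hex.choose := dif_pos hex
      have hmem : f α ∈ Φ₀ := by
        simp only [Φ₀, Finset.mem_filter, Finset.mem_image]
        exact ⟨⟨α, hα, rfl⟩, by rw [hfα]; exact hch.1⟩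
      have hsat := hs _ hmem
      rw [hfα] at hsat
      have := (hTcorr hex.choose s).2 hsat
      rwa [hch.2] at this
  rcases hM Γ hfree hpars hfinreal with ⟨s, hs⟩
  refine ⟨s, ?_, ?_⟩
  · exact (hsidecorr s).1 (hs side (Set.mem_insert _ _))
  · intro φ hφ
    exact (hTcorr φ s).1 (hs (T φ) (Set.mem_insert_of_mem _ ⟨φ, hφ, rfl⟩))

/-- Every ω-saturated LHS model (as a first-order structure for the
correspondence language) is LHS-saturated. -/
theorem omegaSaturated_implies_LHSSaturated (M : LHSModel)
    (hM : M.OmegaSaturated) : M.LHSSaturated := by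
  intro Φ w v
  have h0 : (FOTerm.var 0 : FOTerm M.W).vars ⊆ Set.Iio 1 := by
    simp [FOTerm.vars]
  have hpw : (FOTerm.par w : FOTerm M.W).vars ⊆ Set.Iio 1 := by
    simp [FOTerm.vars]
  have hpv : (FOTerm.par v : FOTerm M.W).vars ⊆ Set.Iio 1 := by
    simp [FOTerm.vars]
  constructor
  · -- left direction: Φ satisfiable in R(w) × {v}
    intro hfin
    exact key M hM Φ w v (fun s φ => M.sat s v φ) (fun s => M.R w s)
      (fun φ => stTr 1 (.var 0) (.par v) φ)
      (.rel (.par w) (.var 0))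
      (fun φ s => by
        have := ST_correct M φ 1 (.var 0) (.par v) (fun _ => s) h0 hpv
        simpa [FOTerm.val] using this)
      (fun φ => by
        have := ST_freeVars φ 1 (FOTerm.var 0) (FOTerm.par v)
        simpa [FOTerm.vars] using this)
      (fun φ => by
        have := ST_pars φ 1 (FOTerm.var 0) (FOTerm.par v)
        refine this.trans ?_
        simp only [FOTerm.pars, Set.empty_union]
        intro x hx; simp at hx; simp [hx])
      (by simp [FOFormP.freeVars, FOTerm.vars])
      (by intro x hx; simp [FOFormP.pars, FOTerm.pars] at hx; simp [hx])
      (fun s => Iff.rfl)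
      hfin
  · -- right direction: Φ satisfiable in {w} × R(v)
    intro hfin
    exact key M hM Φ w v (fun t φ => M.sat w t φ) (fun t => M.R v t)
      (fun φ => stTr 1 (.par w) (.var 0) φ)
      (.rel (.par v) (.var 0))
      (fun φ t => by
        have := ST_correct M φ 1 (.par w) (.var 0) (fun _ => t) hpw h0
        simpa [FOTerm.val] using this)
      (fun φ => by
        have := ST_freeVars φ 1 (FOTerm.par w) (FOTerm.var 0)
        simpa [FOTerm.vars] using this)
      (fun φ => by
        have := ST_pars φ 1 (FOTerm.par w) (FOTerm.var 0)
        refine this.trans ?_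
        simp only [FOTerm.pars, Set.union_empty]
        intro x hx; simp at hx; simp [hx])
      (by simp [FOFormP.freeVars, FOTerm.vars])
      (by intro x hx; simp [FOFormP.pars, FOTerm.pars] at hx; simp [hx])
      (fun t => Iff.rfl)
      hfin
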